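/- arXiv:1809.06684 — 6 statements merged into one kernel-verified Lean document; each statement's English description precedes it below -/
import Mathlib

section
/- Let D be a dictionary of K unit-norm atoms in ℝ^d with coherence μ = max_{j≠k} |⟨a_j, a_k⟩|, let J be an index set with δ_J := ‖D_J*D_J − I‖ ≤ δ < 1, and let a_k be an atom with k ∉ J. Then the squared norm of the residual after projecting a_k away from span(D_J) satisfies ‖(I − P(D_J)) a_k‖² ≥ 1 − |J|μ²/(1−δ), where P(D_J) is the orthogonal projection onto the column span of D_J. -/
open scoped RealInnerProductSpace

set_option maxHeartbeats 1000000 in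
/-- For unit-norm atoms with coherence `μ`, a subset `J` whose Gram matrix satisfies
`δ_J ≤ δ < 1`, and `k ∉ J`, the residual of `a k` after projecting onto the span of the
atoms in `J` satisfies `‖(I − P(D_J)) a k‖² ≥ 1 − |J| μ² / (1 − δ)`. -/
theorem residual_norm_sq_lower_bound {d K : ℕ} (a : Fin K → EuclideanSpace ℝ (Fin d))
    (μ δ : ℝ) (J : Finset (Fin K)) (k : Fin K)
    (hnorm : ∀ i, ‖a i‖ = 1)
    (hμ : ∀ i j, i ≠ j → |⟪a i, a j⟫| ≤ μ)
    (hδ : ‖Matrix.toEuclideanCLM (𝕜 := ℝ) (n := ↥J)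
        ((Matrix.of fun i j : ↥J => ⟪a i, a j⟫) - 1)‖ ≤ δ)
    (hδ1 : δ < 1) (hk : k ∉ J) :
    1 - J.card * μ ^ 2 / (1 - δ) ≤
      ‖a k - (Submodule.orthogonalProjectionOnto (Submodule.span ℝ (a '' ↑J)) (a k) :
        EuclideanSpace ℝ (Fin d))‖ ^ 2 := by
  set V := Submodule.span ℝ (a '' ↑J) with hV
  set p : EuclideanSpace ℝ (Fin d) := (Submodule.orthogonalProjectionOnto V (a k) : EuclideanSpace ℝ (Fin d))
    with hpdef
  have hpV : p ∈ V := (Submodule.orthogonalProjectionOnto V (a k)).2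
  obtain ⟨l, hl, hlp⟩ := (Finsupp.mem_span_image_iff_linearCombination ℝ).1 hpV
  have hsupp : l.support ⊆ J := fun i hi => by
    exact_mod_cast (Finsupp.mem_supported ℝ l).1 hl hi
  have hp : p = ∑ i ∈ J, l i • a i := by
    rw [← hlp, Finsupp.linearCombination_apply]
    exact Finsupp.sum_of_support_subset l hsupp _ (fun i _ => zero_smul ℝ _)
  set S : ℝ := ‖p‖ ^ 2 with hSdef
  set E : ℝ := ∑ i ∈ J, (l i) ^ 2 with hEdef
  have hδpos : (0:ℝ) < 1 - δ := by linarith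
  have hEnonneg : 0 ≤ E := Finset.sum_nonneg fun i _ => sq_nonneg _
  have hSnonneg : 0 ≤ S := sq_nonneg _
  -- the coefficient vector as an element of Euclidean space over ↥J
  set x : EuclideanSpace ℝ ↥J := WithLp.toLp 2 (fun i => l i) with hxdef
  have hxnorm : ‖x‖ ^ 2 = E := by
    rw [← real_inner_self_eq_norm_sq]
    simp only [hEdef, PiLp.inner_apply, RCLike.inner_apply, starRingEnd_apply, star_trivial]
    rw [← Finset.sum_attach J (fun i => l i ^ 2)]
    exact Finset.sum_congr rfl fun i _ => (sq (l i)).symm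
  -- ‖p‖² as a double sum
  have hS : S = ∑ i ∈ J, ∑ j ∈ J, l i * l j * ⟪a i, a j⟫ := by
    rw [hSdef, ← real_inner_self_eq_norm_sq, hp, sum_inner]
    refine Finset.sum_congr rfl fun i _ => ?_
    rw [inner_sum]
    refine Finset.sum_congr rfl fun j _ => ?_
    rw [real_inner_smul_left, real_inner_smul_right]; ring
  -- quadratic form identity
  have hquad : ⟪(Matrix.toEuclideanCLM (𝕜 := ℝ) (n := ↥J)
      ((Matrix.of fun i j : ↥J => ⟪a i, a j⟫) - 1)) x, x⟫ = S - E := by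
    have happly : ∀ j : ↥J, (Matrix.toEuclideanCLM (𝕜 := ℝ) (n := ↥J)
        ((Matrix.of fun i j : ↥J => ⟪a i, a j⟫) - 1)) x j =
        ∑ i : ↥J, ((⟪a j, a i⟫ : ℝ) - if j = i then 1 else 0) * l i := by
      intro j
      rfl
    rw [PiLp.inner_apply]
    simp only [happly, RCLike.inner_apply, starRingEnd_apply, star_trivial]
    have key : ∀ j : ↥J, (∑ i : ↥J, ((⟪a j, a i⟫ : ℝ) - if j = i then 1 else 0) * l i) * l j
        = (∑ i : ↥J, l j * l i * ⟪a j, a i⟫) - l j ^ 2 := by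
      intro j
      rw [Finset.sum_mul]
      have : ∀ i : ↥J, ((⟪a j, a i⟫ : ℝ) - if j = i then 1 else 0) * l i * l j
          = l j * l i * ⟪a j, a i⟫ - if j = i then l i * l j else 0 := by
        intro i; split_ifs <;> ring
      rw [Finset.sum_congr rfl fun i _ => this i, Finset.sum_sub_distrib,
        Finset.sum_ite_eq Finset.univ j (fun i : ↥J => l i * l j)]
      simp [sq]
    change ∑ j : ↥J, l ↑j * ∑ i : ↥J, ((⟪a j, a i⟫ : ℝ) - if j = i then 1 else 0) * l i = S - E
    rw [Finset.sum_congr rfl fun (j : ↥J) _ => mul_comm (l ↑j) _]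
    rw [Finset.sum_congr rfl fun j _ => key j, Finset.sum_sub_distrib]
    congr 1
    · have conv1 : ∀ c : Fin K, ∑ i : ↥J, l c * l i * ⟪a c, a i⟫
          = ∑ i ∈ J, l c * l i * ⟪a c, a i⟫ := fun c =>
        Finset.sum_coe_sort J (fun i => l c * l i * ⟪a c, a i⟫)
      simp only [conv1]
      rw [hS]
      exact Finset.sum_coe_sort J (fun c => ∑ i ∈ J, l c * l i * ⟪a c, a i⟫)
    · exact Finset.sum_coe_sort J (fun c => l c ^ 2)
  -- operator norm bound gives (1-δ) E ≤ S
  have hES : (1 - δ) * E ≤ S := by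
    set T := Matrix.toEuclideanCLM (𝕜 := ℝ) (n := ↥J)
      ((Matrix.of fun i j : ↥J => ⟪a i, a j⟫) - 1) with hT
    have h1 : |⟪T x, x⟫| ≤ ‖T x‖ * ‖x‖ := abs_real_inner_le_norm _ _
    have h2 : ‖T x‖ ≤ ‖T‖ * ‖x‖ := T.le_opNorm x
    have h3 : |S - E| ≤ δ * E := by
      rw [← hquad]
      calc |⟪T x, x⟫| ≤ ‖T x‖ * ‖x‖ := h1
        _ ≤ (‖T‖ * ‖x‖) * ‖x‖ := by
            exact mul_le_mul_of_nonneg_right h2 (norm_nonneg _)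
        _ ≤ (δ * ‖x‖) * ‖x‖ := by
            exact mul_le_mul_of_nonneg_right
              (mul_le_mul_of_nonneg_right hδ (norm_nonneg _)) (norm_nonneg _)
        _ = δ * E := by rw [mul_assoc, ← sq, hxnorm]
    have := (abs_le.1 h3).1
    linarith
  -- ⟪a k, p⟫ = S
  have h0 : ⟪a k - p, p⟫ = 0 := Submodule.starProjection_inner_eq_zero (K := V) (a k) p hpV
  have hak : ⟪a k, p⟫ = S := by
    rw [inner_sub_left] at h0
    rw [hSdef, ← real_inner_self_eq_norm_sq]
    linarith
  -- Cauchy–Schwarz style bound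
  have hS2 : S ≤ (∑ i ∈ J, |l i|) * μ := by
    rw [← hak, hp, inner_sum, Finset.sum_mul]
    refine Finset.sum_le_sum fun i hi => ?_
    rw [real_inner_smul_right]
    have hki : k ≠ i := fun h => hk (h ▸ hi)
    calc l i * ⟪a k, a i⟫ ≤ |l i * ⟪a k, a i⟫| := le_abs_self _
      _ = |l i| * |⟪a k, a i⟫| := abs_mul _ _
      _ ≤ |l i| * μ := mul_le_mul_of_nonneg_left (hμ k i hki) (abs_nonneg _)
  have h4 : S ^ 2 ≤ (J.card * μ ^ 2) * E := by
    have h2 : S ^ 2 ≤ (∑ i ∈ J, |l i|) ^ 2 * μ ^ 2 := by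
      rw [← mul_pow]
      exact pow_le_pow_left₀ hSnonneg hS2 2
    have h3 : (∑ i ∈ J, |l i|) ^ 2 ≤ J.card * E := by
      simpa [sq_abs, hEdef] using sq_sum_le_card_mul_sum_sq (s := J) (f := fun i => |l i|)
    calc S ^ 2 ≤ (∑ i ∈ J, |l i|) ^ 2 * μ ^ 2 := h2
      _ ≤ (J.card * E) * μ ^ 2 := mul_le_mul_of_nonneg_right h3 (sq_nonneg _)
      _ = (J.card * μ ^ 2) * E := by ring
  -- conclude S ≤ card μ² / (1-δ)
  have hfinal : S ≤ J.card * μ ^ 2 / (1 - δ) := by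
    rcases eq_or_lt_of_le hSnonneg with h | h
    · rw [← h]; positivity
    · rw [le_div_iff₀ hδpos]
      nlinarith [mul_le_mul_of_nonneg_left hES
          (show (0:ℝ) ≤ J.card * μ ^ 2 by positivity),
        mul_le_mul_of_nonneg_left h4 hδpos.le]
  -- Pythagoras
  have hpyth : ‖a k - p‖ ^ 2 = 1 - S := by
    have := norm_add_sq_real (a k - p) p
    rw [sub_add_cancel, h0, hnorm k] at this
    rw [hSdef]; linarith [this]
  rw [hpyth]
  linarith
end

section
/- With the same setup (unit-norm atoms, coherence μ, index set J with δ_J ≤ δ < 1), for any two indices i, k ∉ J with i ≠ k, we have |⟨a_k, (I − P(D_J)) a_i⟩| ≤ μ + |J|μ²/(1−δ). -/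
open scoped RealInnerProductSpace

/-- For unit-norm atoms with coherence `μ` and `δ_J ≤ δ < 1`, for indices `i, k ∉ J`
with `i ≠ k` we have `|⟨a k, (I − P(D_J)) a i⟩| ≤ μ + |J| μ² / (1 − δ)`. -/
theorem inner_residual_upper_bound {d K : ℕ} (a : Fin K → EuclideanSpace ℝ (Fin d))
    (μ δ : ℝ) (J : Finset (Fin K)) (i k : Fin K)
    (hnorm : ∀ j, ‖a j‖ = 1)
    (hμ : ∀ j j', j ≠ j' → |⟪a j, a j'⟫| ≤ μ)
    (hδ : ‖Matrix.toEuclideanCLM (𝕜 := ℝ) (n := ↥J)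
        ((Matrix.of fun j j' : ↥J => ⟪a j, a j'⟫) - 1)‖ ≤ δ)
    (hδ1 : δ < 1) (hi : i ∉ J) (hk : k ∉ J) (hik : i ≠ k) :
    |⟪a k, a i - (Submodule.orthogonalProjectionOnto (Submodule.span ℝ (a '' ↑J)) (a i) :
        EuclideanSpace ℝ (Fin d))⟫| ≤ μ + J.card * μ ^ 2 / (1 - δ) := by
  classical
  have hμ0 : 0 ≤ μ := le_trans (abs_nonneg _) (hμ i k hik)
  have h1δ : 0 < 1 - δ := by linarith
  set G : Matrix ↥J ↥J ℝ := Matrix.of fun j j' : ↥J => ⟪a j, a j'⟫ with hG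
  set T := Matrix.toEuclideanCLM (𝕜 := ℝ) (n := ↥J) G with hTdef
  have key : ∀ (x : EuclideanSpace ℝ ↥J) (l : ↥J), T x l = ∑ j, G l j * x j := by
    intro x l
    have := Matrix.ofLp_toEuclideanCLM (𝕜 := ℝ) (n := ↥J) G x
    have h2 := congrFun this l
    exact h2
  have hTδ : ‖(1 : EuclideanSpace ℝ ↥J →L[ℝ] EuclideanSpace ℝ ↥J) - T‖ ≤ δ := by
    have : (1 : EuclideanSpace ℝ ↥J →L[ℝ] EuclideanSpace ℝ ↥J) - T
        = -(Matrix.toEuclideanCLM (𝕜 := ℝ) (n := ↥J) (G - 1)) := by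
      rw [map_sub, map_one, neg_sub]
    rw [this, norm_neg]
    exact hδ
  have hT1 : ‖(1 : EuclideanSpace ℝ ↥J →L[ℝ] EuclideanSpace ℝ ↥J) - T‖ < 1 :=
    lt_of_le_of_lt hTδ hδ1
  -- invertibility
  set u : (EuclideanSpace ℝ ↥J →L[ℝ] EuclideanSpace ℝ ↥J)ˣ := Units.oneSub _ hT1 with hu
  have huval : (u : EuclideanSpace ℝ ↥J →L[ℝ] EuclideanSpace ℝ ↥J) = T := by
    simp [hu, Units.oneSub, sub_sub_cancel]
  set b : EuclideanSpace ℝ ↥J := WithLp.toLp 2 (fun j => ⟪a j, a i⟫ : ↥J → ℝ) with hb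
  set c : EuclideanSpace ℝ ↥J := (↑u⁻¹ : EuclideanSpace ℝ ↥J →L[ℝ] EuclideanSpace ℝ ↥J) b
    with hc
  have hTc : T c = b := by
    have := u.mul_inv
    calc T c = ((u : EuclideanSpace ℝ ↥J →L[ℝ] EuclideanSpace ℝ ↥J)
        * (↑u⁻¹ : EuclideanSpace ℝ ↥J →L[ℝ] EuclideanSpace ℝ ↥J)) b := by
          rw [huval]; rfl
      _ = b := by rw [← Units.val_mul, mul_inv_cancel, Units.val_one, ContinuousLinearMap.one_apply]
  set y : EuclideanSpace ℝ (Fin d) := ∑ j : ↥J, c j • a j with hy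
  have hinner : ∀ l : ↥J, ⟪a l, y⟫ = b l := by
    intro l
    rw [hy, inner_sum]
    have : ∀ j : ↥J, ⟪a l, c j • a j⟫ = G l j * c j := by
      intro j
      rw [real_inner_smul_right]
      simp [hG, mul_comm]
    rw [Finset.sum_congr rfl fun j _ => this j, ← key, hTc]
  have hymem : y ∈ Submodule.span ℝ (a '' ↑J) := by
    refine Submodule.sum_mem _ fun j _ => Submodule.smul_mem _ _ ?_
    exact Submodule.subset_span ⟨j, j.2, rfl⟩
  have horth : ∀ w ∈ Submodule.span ℝ (a '' ↑J), ⟪a i - y, w⟫ = 0 := by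
    intro w hw
    induction hw using Submodule.span_induction with
    | mem w hw =>
      obtain ⟨l, hl, rfl⟩ := hw
      have hl' : l ∈ J := hl
      have h' : ⟪a l, y⟫ = ⟪a l, a i⟫ := hinner ⟨l, hl'⟩
      rw [inner_sub_left, sub_eq_zero]
      exact (real_inner_comm _ _).trans (h'.symm.trans (real_inner_comm _ _))
    | zero => simp
    | add x z _ _ hx hz => rw [inner_add_right, hx, hz]; ring
    | smul t x _ hx => rw [real_inner_smul_right, hx]; ring
  have hproj : (Submodule.orthogonalProjectionOnto (Submodule.span ℝ (a '' ↑J)) (a i) :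
      EuclideanSpace ℝ (Fin d)) = y :=
    Submodule.eq_starProjection_of_mem_of_inner_eq_zero hymem horth
  rw [hproj]
  -- expand the inner product
  have hexp : ⟪a k, a i - y⟫ = ⟪a k, a i⟫ - ∑ j : ↥J, c j * ⟪a k, a j⟫ := by
    rw [inner_sub_right, hy, inner_sum]
    congr 1
    exact Finset.sum_congr rfl fun j _ => real_inner_smul_right _ _ _
  -- norm bounds
  have hcardμ : ∀ j : ↥J, |⟪a k, a j⟫| ≤ μ := fun j =>
    hμ k j (fun h => hk (h ▸ j.2))
  have hbj : ∀ j : ↥J, |b j| ≤ μ := fun j =>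
    hμ j i (fun h => hi (h ▸ j.2))
  have hnb : ‖b‖ ≤ Real.sqrt J.card * μ := by
    rw [EuclideanSpace.norm_eq]
    have : ∑ j : ↥J, ‖b j‖ ^ 2 ≤ (J.card : ℝ) * μ ^ 2 := by
      calc ∑ j : ↥J, ‖b j‖ ^ 2 ≤ ∑ _j : ↥J, μ ^ 2 := by
            refine Finset.sum_le_sum fun j _ => ?_
            have := hbj j
            have habs : ‖b j‖ = |b j| := Real.norm_eq_abs _
            rw [habs]
            exact pow_le_pow_left₀ (abs_nonneg _) this 2
        _ = (J.card : ℝ) * μ ^ 2 := by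
            rw [Finset.sum_const]
            simp [Fintype.card_coe]
    calc Real.sqrt (∑ j : ↥J, ‖b j‖ ^ 2) ≤ Real.sqrt ((J.card : ℝ) * μ ^ 2) :=
          Real.sqrt_le_sqrt this
      _ = Real.sqrt J.card * μ := by
          rw [Real.sqrt_mul (Nat.cast_nonneg _), Real.sqrt_sq hμ0]
  have hnc : ‖c‖ ≤ ‖b‖ / (1 - δ) := by
    have h1 : c - b = ((1 : EuclideanSpace ℝ ↥J →L[ℝ] EuclideanSpace ℝ ↥J) - T) c := by
      rw [ContinuousLinearMap.sub_apply, ContinuousLinearMap.one_apply, hTc]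
    have h2 : ‖c - b‖ ≤ δ * ‖c‖ := by
      rw [h1]
      calc ‖((1 : EuclideanSpace ℝ ↥J →L[ℝ] EuclideanSpace ℝ ↥J) - T) c‖
          ≤ ‖(1 : EuclideanSpace ℝ ↥J →L[ℝ] EuclideanSpace ℝ ↥J) - T‖ * ‖c‖ :=
            ContinuousLinearMap.le_opNorm _ _
        _ ≤ δ * ‖c‖ := by
            exact mul_le_mul_of_nonneg_right hTδ (norm_nonneg _)
    have h3 : ‖c‖ ≤ ‖b‖ + δ * ‖c‖ := by
      calc ‖c‖ = ‖b + (c - b)‖ := by rw [add_sub_cancel]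
        _ ≤ ‖b‖ + ‖c - b‖ := norm_add_le _ _
        _ ≤ ‖b‖ + δ * ‖c‖ := by linarith
    rw [le_div_iff₀ h1δ]
    nlinarith [norm_nonneg c]
  have hsumc : ∑ j : ↥J, |c j| ≤ Real.sqrt J.card * ‖c‖ := by
    have hsq : (∑ j : ↥J, |c j|) ^ 2 ≤ (J.card : ℝ) * ‖c‖ ^ 2 := by
      have := sq_sum_le_card_mul_sum_sq (s := (Finset.univ : Finset ↥J))
        (f := fun j => |c j|)
      have hcn : ‖c‖ ^ 2 = ∑ j : ↥J, |c j| ^ 2 := by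
        rw [EuclideanSpace.norm_eq, Real.sq_sqrt (by positivity)]
        exact Finset.sum_congr rfl fun j _ => by rw [Real.norm_eq_abs]
      rw [hcn]
      simpa [Fintype.card_coe] using this
    have h0 : (0:ℝ) ≤ ∑ j : ↥J, |c j| := Finset.sum_nonneg fun j _ => abs_nonneg _
    have := Real.sqrt_le_sqrt hsq
    rwa [Real.sqrt_sq h0, Real.sqrt_mul (Nat.cast_nonneg _),
      Real.sqrt_sq (norm_nonneg _)] at this
  -- final estimate
  rw [hexp]
  calc |⟪a k, a i⟫ - ∑ j : ↥J, c j * ⟪a k, a j⟫|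
      ≤ |⟪a k, a i⟫| + |∑ j : ↥J, c j * ⟪a k, a j⟫| := abs_sub _ _
    _ ≤ μ + ∑ j : ↥J, |c j| * μ := by
        refine add_le_add (hμ k i hik.symm) ?_
        calc |∑ j : ↥J, c j * ⟪a k, a j⟫| ≤ ∑ j : ↥J, |c j * ⟪a k, a j⟫| :=
              Finset.abs_sum_le_sum_abs _ _
          _ ≤ ∑ j : ↥J, |c j| * μ := by
              refine Finset.sum_le_sum fun j _ => ?_
              rw [abs_mul]
              exact mul_le_mul_of_nonneg_left (hcardμ j) (abs_nonneg _)
    _ = μ + (∑ j : ↥J, |c j|) * μ := by rw [← Finset.sum_mul]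
    _ ≤ μ + J.card * μ ^ 2 / (1 - δ) := by
        have h1 : (∑ j : ↥J, |c j|) * μ ≤ Real.sqrt J.card * ‖c‖ * μ :=
          mul_le_mul_of_nonneg_right hsumc hμ0
        have h2 : ‖c‖ ≤ Real.sqrt J.card * μ / (1 - δ) := by
          calc ‖c‖ ≤ ‖b‖ / (1 - δ) := hnc
            _ ≤ Real.sqrt J.card * μ / (1 - δ) := by gcongr
        have hsqsq : Real.sqrt J.card * Real.sqrt J.card = (J.card : ℝ) :=
          Real.mul_self_sqrt (Nat.cast_nonneg _)
        have h3 : Real.sqrt J.card * ‖c‖ * μ ≤ J.card * μ ^ 2 / (1 - δ) := by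
          calc Real.sqrt J.card * ‖c‖ * μ
              ≤ Real.sqrt J.card * (Real.sqrt J.card * μ / (1 - δ)) * μ := by
                refine mul_le_mul_of_nonneg_right ?_ hμ0
                exact mul_le_mul_of_nonneg_left h2 (Real.sqrt_nonneg _)
            _ = J.card * μ ^ 2 / (1 - δ) := by
                rw [show Real.sqrt J.card * (Real.sqrt J.card * μ / (1 - δ)) * μ
                    = Real.sqrt J.card * Real.sqrt J.card * μ ^ 2 / (1 - δ) by ring, hsqsq]
        linarith
end

section
/- With the same setup, for any index k ∉ J, vector coefficient x supported on a set Z disjoint from J, we have |⟨a_k, P(D_J) D_Z x_Z⟩| ≤ (|J| μ/(1−δ)) · max_{j ∉ Z} |⟨a_j, D_Z x_Z⟩|. -/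
set_option maxHeartbeats 1000000

open scoped RealInnerProductSpace

/-- For unit-norm atoms with coherence `μ`, `δ_J ≤ δ < 1`, `k ∉ J`, and a coefficient
vector supported on a set `Z` disjoint from `J`, if `C` bounds `|⟨a j, D_Z x_Z⟩|` for all
`j ∉ Z`, then `|⟨a k, P(D_J) D_Z x_Z⟩| ≤ (|J| μ / (1 − δ)) · C`. -/
theorem inner_projection_signal_bound {d K : ℕ} (a : Fin K → EuclideanSpace ℝ (Fin d))
    (μ δ C : ℝ) (J Z : Finset (Fin K)) (k : Fin K) (x : Fin K → ℝ)
    (hnorm : ∀ j, ‖a j‖ = 1)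
    (hμ : ∀ j j', j ≠ j' → |⟪a j, a j'⟫| ≤ μ)
    (hδ : ‖Matrix.toEuclideanCLM (𝕜 := ℝ) (n := ↥J)
        ((Matrix.of fun j j' : ↥J => ⟪a j, a j'⟫) - 1)‖ ≤ δ)
    (hδ1 : δ < 1) (hk : k ∉ J) (hJZ : Disjoint J Z)
    (hC : ∀ j, j ∉ Z → |⟪a j, ∑ z ∈ Z, x z • a z⟫| ≤ C) :
    |⟪a k, (Submodule.orthogonalProjectionOnto (Submodule.span ℝ (a '' ↑J)) (∑ z ∈ Z, x z • a z) :
        EuclideanSpace ℝ (Fin d))⟫| ≤ J.card * μ / (1 - δ) * C := by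
  set v := ∑ z ∈ Z, x z • a z with hv
  set V := Submodule.span ℝ (a '' ↑J) with hV
  set P : EuclideanSpace ℝ (Fin d) := (Submodule.orthogonalProjectionOnto V v : EuclideanSpace ℝ (Fin d))
    with hP
  have h1δ : (0:ℝ) < 1 - δ := by linarith
  rcases J.eq_empty_or_nonempty with hJe | ⟨j0, hj0⟩
  · have hP0 : P = 0 := by
      have hmem : P ∈ V := (Submodule.orthogonalProjectionOnto V v).2
      rw [hV, hJe] at hmem
      simpa using hmem
    simp [hP0, hJe]
  · -- nonnegativity facts
    have hj0Z : j0 ∉ Z := Finset.disjoint_left.mp hJZ hj0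
    have hC0 : 0 ≤ C := le_trans (abs_nonneg _) (hC j0 hj0Z)
    have hμ0 : 0 ≤ μ := le_trans (abs_nonneg _) (hμ k j0 (fun h => hk (h ▸ hj0)))
    -- representation of the projection
    have hPmem : P ∈ V := (Submodule.orthogonalProjectionOnto V v).2
    rw [hV, Finsupp.mem_span_image_iff_linearCombination] at hPmem
    obtain ⟨l, hl, hPl⟩ := hPmem
    rw [Finsupp.mem_supported] at hl
    have hsum : ∑ j ∈ J, l j • a j = P := by
      rw [← hPl, Finsupp.linearCombination_apply, Finsupp.sum]
      refine (Finset.sum_subset hl ?_).symm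
      intro i _ hi
      simp [Finsupp.notMem_support_iff.mp hi]
    -- the coefficient and data vectors
    set c' : EuclideanSpace ℝ ↥J := WithLp.toLp 2 (fun j => l j) with hc'
    set b : EuclideanSpace ℝ ↥J := WithLp.toLp 2 (fun j => ⟪a j, v⟫) with hb
    -- orthogonality relations
    have horth : ∀ j ∈ J, ⟪a (j:Fin K), v⟫ = ∑ j' ∈ J, l j' * ⟪a j, a j'⟫ := by
      intro j hj
      have hmem : a j ∈ V := Submodule.subset_span ⟨j, hj, rfl⟩
      have h0 : ⟪a j, v - P⟫ = 0 :=
        Submodule.inner_right_of_mem_orthogonal hmem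
          (Submodule.sub_starProjection_mem_orthogonal (K := V) v)
      have : ⟪a j, v⟫ = ⟪a j, P⟫ := by
        rw [inner_sub_right] at h0; linarith
      rw [this, ← hsum, inner_sum]
      simp_rw [real_inner_smul_right]
    -- componentwise action of toEuclideanCLM
    have comp : ∀ (A : Matrix ↥J ↥J ℝ) (c : EuclideanSpace ℝ ↥J) (j : ↥J),
        Matrix.toEuclideanCLM (𝕜 := ℝ) A c j = ∑ j', A j j' * c j' := by
      intro A c j
      have h := congrFun (Matrix.ofLp_toEuclideanCLM (𝕜 := ℝ) A c) j
      simpa [Matrix.toLin'_apply, Matrix.mulVec, dotProduct] using h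
    -- key Gram identity
    have hkey : Matrix.toEuclideanCLM (𝕜 := ℝ) (n := ↥J)
        ((Matrix.of fun j j' : ↥J => ⟪a j, a j'⟫) - 1) c' = b - c' := by
      ext j
      rw [comp]
      have : ∑ j' : ↥J, ((Matrix.of fun j j' : ↥J => ⟪a j, a j'⟫) - 1) j j' * c' j'
          = (∑ j' : ↥J, ⟪a (j:Fin K), a (j':Fin K)⟫ * l j') - l j := by
        simp_rw [Matrix.sub_apply, Matrix.one_apply, Matrix.of_apply, sub_mul,
          Finset.sum_sub_distrib]
        congr 1
        simp [hc', ite_mul]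
      rw [this]
      have h2 : ∑ j' : ↥J, ⟪a (j:Fin K), a (j':Fin K)⟫ * l j'
          = ∑ j' ∈ J, l j' * ⟪a (j:Fin K), a j'⟫ := by
        rw [← Finset.sum_coe_sort J (fun j' => l j' * ⟪a (j:Fin K), a j'⟫)]
        exact Finset.sum_congr rfl fun j' _ => mul_comm _ _
      rw [h2, ← horth j j.2]
      simp [hb, hc']
    -- operator norm bound
    have hbc : ‖b - c'‖ ≤ δ * ‖c'‖ := by
      rw [← hkey]
      calc ‖Matrix.toEuclideanCLM (𝕜 := ℝ) (n := ↥J)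
            ((Matrix.of fun j j' : ↥J => ⟪a j, a j'⟫) - 1) c'‖
          ≤ ‖Matrix.toEuclideanCLM (𝕜 := ℝ) (n := ↥J)
            ((Matrix.of fun j j' : ↥J => ⟪a j, a j'⟫) - 1)‖ * ‖c'‖ :=
            ContinuousLinearMap.le_opNorm _ _
        _ ≤ δ * ‖c'‖ := mul_le_mul_of_nonneg_right hδ (norm_nonneg _)
    have hc'b : ‖c'‖ ≤ ‖b‖ / (1 - δ) := by
      rw [le_div_iff₀ h1δ]
      have h1 := norm_sub_norm_le c' b
      rw [norm_sub_rev] at h1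
      nlinarith [norm_nonneg c', norm_nonneg b]
    -- bound on ‖b‖
    set s : ℝ := Real.sqrt J.card with hs
    have hs0 : 0 ≤ s := Real.sqrt_nonneg _
    have hss : s * s = J.card := Real.mul_self_sqrt (Nat.cast_nonneg _)
    have hbnorm : ‖b‖ ≤ s * C := by
      rw [EuclideanSpace.norm_eq]
      have h1 : ∑ j : ↥J, ‖b j‖ ^ 2 ≤ ∑ _j : ↥J, C ^ 2 := by
        refine Finset.sum_le_sum fun j _ => ?_
        have hjZ : (j:Fin K) ∉ Z := Finset.disjoint_left.mp hJZ j.2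
        have := hC j hjZ
        have hb' : ‖b j‖ ≤ C := by simpa [hb, Real.norm_eq_abs] using this
        exact pow_le_pow_left₀ (norm_nonneg _) hb' 2
      calc Real.sqrt (∑ j : ↥J, ‖b j‖ ^ 2) ≤ Real.sqrt (∑ _j : ↥J, C ^ 2) :=
            Real.sqrt_le_sqrt h1
        _ = s * C := by
            rw [Finset.sum_const, Finset.card_univ, Fintype.card_coe, nsmul_eq_mul,
              Real.sqrt_mul (Nat.cast_nonneg _), Real.sqrt_sq hC0, hs]
    -- Cauchy–Schwarz on the coefficients
    have hsumabs : ∑ j ∈ J, |l j| ≤ s * ‖c'‖ := by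
      have hcs : (∑ j : ↥J, 1 * |c' j|) ^ 2 ≤ (∑ _j : ↥J, (1:ℝ) ^ 2) * ∑ j : ↥J, |c' j| ^ 2 :=
        Finset.sum_mul_sq_le_sq_mul_sq Finset.univ _ _
      have hnorm2 : ∑ j : ↥J, |c' j| ^ 2 = ‖c'‖ ^ 2 := by
        rw [EuclideanSpace.norm_eq, Real.sq_sqrt (by positivity)]
        simp [Real.norm_eq_abs]
      have hcard : ∑ _j : ↥J, (1:ℝ) ^ 2 = (J.card : ℝ) := by
        simp [Finset.card_univ, Fintype.card_coe]
      have hsum_eq : ∑ j ∈ J, |l j| = ∑ j : ↥J, 1 * |c' j| := by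
        rw [← Finset.sum_coe_sort J (fun j => |l j|)]
        exact Finset.sum_congr rfl fun j _ => by simp [hc']
      rw [hsum_eq]
      have h0 : 0 ≤ ∑ j : ↥J, 1 * |c' j| :=
        Finset.sum_nonneg fun j _ => by positivity
      rw [hcard, hnorm2] at hcs
      calc ∑ j : ↥J, 1 * |c' j| = Real.sqrt ((∑ j : ↥J, 1 * |c' j|) ^ 2) :=
            (Real.sqrt_sq h0).symm
        _ ≤ Real.sqrt ((J.card : ℝ) * ‖c'‖ ^ 2) := Real.sqrt_le_sqrt hcs
        _ = s * ‖c'‖ := by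
            rw [Real.sqrt_mul (Nat.cast_nonneg _), Real.sqrt_sq (norm_nonneg _)]
    -- final chain
    have hinner : ⟪a k, P⟫ = ∑ j ∈ J, l j * ⟪a k, a j⟫ := by
      rw [← hsum, inner_sum]
      simp_rw [real_inner_smul_right]
    calc |⟪a k, P⟫| = |∑ j ∈ J, l j * ⟪a k, a j⟫| := by rw [hinner]
      _ ≤ ∑ j ∈ J, |l j * ⟪a k, a j⟫| := Finset.abs_sum_le_sum_abs _ _
      _ ≤ ∑ j ∈ J, |l j| * μ := by
          refine Finset.sum_le_sum fun j hj => ?_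
          rw [abs_mul]
          exact mul_le_mul_of_nonneg_left (hμ k j (fun h => hk (h ▸ hj))) (abs_nonneg _)
      _ = (∑ j ∈ J, |l j|) * μ := (Finset.sum_mul _ _ _).symm
      _ ≤ (s * ‖c'‖) * μ := mul_le_mul_of_nonneg_right hsumabs hμ0
      _ ≤ (s * (‖b‖ / (1 - δ))) * μ := by gcongr
      _ ≤ (s * ((s * C) / (1 - δ))) * μ := by gcongr
      _ = J.card * μ / (1 - δ) * C := by
          rw [← hss]; field_simp
end

section
/- With J = A ∪ B, δ_J ≤ δ < 1, coherence μ, and noise vector e ∈ ℝ^d, for every k ∉ J we have |⟨a_k, Q(D_J) e⟩| ≤ (1 + μ√(|J|·|B|)/(1−δ)) · max_{k' ∉ A} |⟨Q(D_A) a_{k'}, e⟩|. -/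
set_option maxHeartbeats 1000000

open scoped RealInnerProductSpace

theorem inv_oneSub_norm_le {R : Type*} [NormedRing R] [CompleteSpace R]
    (t : R) (δ : ℝ) (hone : ‖(1:R)‖ ≤ 1) (hle : ‖t‖ ≤ δ) (hδ : δ < 1) (h : ‖t‖ < 1) :
    ‖((Units.oneSub t h)⁻¹ : Rˣ).1‖ ≤ (1 - δ)⁻¹ := by
  have h0 : (0:ℝ) ≤ δ := le_trans (norm_nonneg t) hle
  have hg : HasSum (fun n : ℕ => δ ^ n) (1 - δ)⁻¹ := hasSum_geometric_of_lt_one h0 hδ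
  have he : ((Units.oneSub t h)⁻¹ : Rˣ).1 = ∑' n : ℕ, t ^ n := rfl
  rw [he]
  refine tsum_of_norm_bounded hg fun n => ?_
  rcases Nat.eq_zero_or_pos n with hn | hn
  · subst hn; simpa using hone
  calc ‖t ^ n‖ ≤ ‖t‖ ^ n := norm_pow_le' t hn
    _ ≤ δ ^ n := pow_le_pow_left₀ (norm_nonneg t) hle n

private lemma mem_orth_span {E : Type*} [NormedAddCommGroup E] [InnerProductSpace ℝ E]
    {S : Set E} {v : E} (h : ∀ w ∈ S, ⟪w, v⟫ = 0) : v ∈ (Submodule.span ℝ S)ᗮ := by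
  rw [Submodule.mem_orthogonal]
  intro u hu
  induction hu using Submodule.span_induction with
  | mem w hw => exact h w hw
  | zero => simp
  | add u w _ _ hu hw => simp [inner_add_left, hu, hw]
  | smul c u _ hu => simp [inner_smul_left, hu]

/-- For `J = A ∪ B` with `A, B` disjoint, coherence `μ`, `δ_J ≤ δ < 1` and `k ∉ J`:
if `C` bounds `|⟨Q(D_A) a k', e⟩|` for all `k' ∉ A`, then
`|⟨a k, Q(D_J) e⟩| ≤ (1 + μ √(|J|·|B|) / (1 − δ)) · C`. -/
theorem residual_noise_bound {d K : ℕ} (a : Fin K → EuclideanSpace ℝ (Fin d))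
    (μ δ C : ℝ) (A B : Finset (Fin K)) (k : Fin K) (e : EuclideanSpace ℝ (Fin d))
    (hnorm : ∀ i, ‖a i‖ = 1)
    (hμ : ∀ i j, i ≠ j → |⟪a i, a j⟫| ≤ μ)
    (hAB : Disjoint A B)
    (hδ : ‖Matrix.toEuclideanCLM (𝕜 := ℝ) (n := ↥(A ∪ B))
        ((Matrix.of fun i j : ↥(A ∪ B) => ⟪a i, a j⟫) - 1)‖ ≤ δ)
    (hδ1 : δ < 1) (hk : k ∉ A ∪ B)
    (hC : ∀ k', k' ∉ A →
      |⟪a k' - (Submodule.orthogonalProjectionOnto (Submodule.span ℝ (a '' ↑A)) (a k') :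
        EuclideanSpace ℝ (Fin d)), e⟫| ≤ C) :
    |⟪a k, e - (Submodule.orthogonalProjectionOnto (Submodule.span ℝ (a '' ↑(A ∪ B))) e :
        EuclideanSpace ℝ (Fin d))⟫| ≤
      (1 + μ * Real.sqrt ((A ∪ B).card * B.card) / (1 - δ)) * C := by
  classical
  set J := A ∪ B with hJ
  -- operator setup
  set G : Matrix ↥J ↥J ℝ := Matrix.of fun i j : ↥J => ⟪a i, a j⟫ with hG
  set T := Matrix.toEuclideanCLM (𝕜 := ℝ) (n := ↥J) G with hT
  have hδ0 : (0:ℝ) ≤ δ := le_trans (norm_nonneg _) hδ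
  have h1δ : (0:ℝ) < 1 - δ := by linarith
  have hδ' : ‖1 - T‖ ≤ δ := by
    have : Matrix.toEuclideanCLM (𝕜 := ℝ) (n := ↥J) (G - 1) = T - 1 := by
      simp [hT, map_sub]
    rw [norm_sub_rev]
    rw [← this]
    exact hδ
  have ht1 : ‖1 - T‖ < 1 := lt_of_le_of_lt hδ' hδ1
  set u : (EuclideanSpace ℝ ↥J →L[ℝ] EuclideanSpace ℝ ↥J)ˣ := Units.oneSub (1 - T) ht1 with hu
  have huval : (u : EuclideanSpace ℝ ↥J →L[ℝ] EuclideanSpace ℝ ↥J) = T := by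
    simp [hu]
  set g : EuclideanSpace ℝ ↥J := (WithLp.equiv 2 (↥J → ℝ)).symm (fun i => ⟪a i.1, a k⟫) with hg
  set x : EuclideanSpace ℝ ↥J := ((u⁻¹ : _ˣ) : EuclideanSpace ℝ ↥J →L[ℝ] EuclideanSpace ℝ ↥J) g
    with hx
  have hTx : T x = g := by
    have h1 : ((u : EuclideanSpace ℝ ↥J →L[ℝ] EuclideanSpace ℝ ↥J) *
        ((u⁻¹ : _ˣ) : EuclideanSpace ℝ ↥J →L[ℝ] EuclideanSpace ℝ ↥J)) = 1 := u.mul_inv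
    rw [hx, ← huval, ← ContinuousLinearMap.mul_apply, h1, ContinuousLinearMap.one_apply]
  -- entrywise equation
  have hentry : ∀ i : ↥J, ∑ j : ↥J, ⟪a i.1, a j.1⟫ * x j = ⟪a i.1, a k⟫ := by
    intro i
    have h2 := congrArg (⇑(WithLp.equiv 2 (↥J → ℝ))) hTx
    rw [WithLp.equiv_apply, Matrix.ofLp_toEuclideanCLM] at h2
    have h3 := congrFun h2 i
    simp only [hg, Matrix.toLin'_apply, Matrix.mulVec, dotProduct,
      WithLp.equiv_symm_apply, WithLp.ofLp_toLp, hG, Matrix.of_apply] at h3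
    exact h3
  -- norm bounds
  have hxnorm : ‖x‖ ≤ (1 - δ)⁻¹ * ‖g‖ := by
    calc ‖x‖ ≤ ‖((u⁻¹ : _ˣ) : EuclideanSpace ℝ ↥J →L[ℝ] EuclideanSpace ℝ ↥J)‖ * ‖g‖ :=
          ContinuousLinearMap.le_opNorm _ _
      _ ≤ (1 - δ)⁻¹ * ‖g‖ :=
          mul_le_mul_of_nonneg_right (inv_oneSub_norm_le _ δ ContinuousLinearMap.norm_id_le hδ' hδ1 ht1) (norm_nonneg _)
  -- geometric part
  have hkA : k ∉ A := fun h => hk (Finset.mem_union_left _ h)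
  set spA := Submodule.span ℝ (a '' (A : Set (Fin K))) with hspA
  set spJ := Submodule.span ℝ (a '' (J : Set (Fin K))) with hspJ
  have hAJ : spA ≤ spJ := Submodule.span_mono (Set.image_mono (by
    exact_mod_cast Finset.coe_subset.2 Finset.subset_union_left))
  set y : Fin K → ℝ := fun j => if h : j ∈ J then x ⟨j, h⟩ else 0 with hy
  set v : EuclideanSpace ℝ (Fin d) := a k - ∑ j ∈ J, y j • a j with hv
  have hsum_eq : ∑ j ∈ J, y j • a j = ∑ j : ↥J, x j • a j.1 := by
    rw [← Finset.sum_coe_sort J (fun j => y j • a j)]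
    refine Finset.sum_congr rfl fun j _ => ?_
    simp [hy, j.2]
  have hvJ : v ∈ spJᗮ := by
    refine mem_orth_span ?_
    rintro w ⟨i, hi, rfl⟩
    have hi' : i ∈ J := by exact_mod_cast hi
    have he := hentry ⟨i, hi'⟩
    rw [hv, hsum_eq]
    rw [inner_sub_right, inner_sum]
    simp only [real_inner_smul_right]
    rw [sub_eq_zero, ← he]
    exact Finset.sum_congr rfl fun j _ => mul_comm _ _
  set q : Fin K → EuclideanSpace ℝ (Fin d) := fun i =>
    a i - (Submodule.orthogonalProjectionOnto spA (a i) : EuclideanSpace ℝ (Fin d)) with hq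
  have hqA : ∀ i, q i ∈ spAᗮ := fun i => Submodule.sub_starProjection_mem_orthogonal (K := spA) (a i)
  set u0 : EuclideanSpace ℝ (Fin d) := q k - ∑ j ∈ B, y j • q j with hu0
  have hu0A : u0 ∈ spAᗮ :=
    sub_mem (hqA k) (Submodule.sum_mem _ fun j _ => Submodule.smul_mem _ _ (hqA j))
  have hvA : v ∈ spAᗮ := Submodule.orthogonal_le hAJ hvJ
  have hdiffA : v - u0 ∈ spA := by
    have hexp : v - u0 = (Submodule.orthogonalProjectionOnto spA (a k) : EuclideanSpace ℝ (Fin d))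
        - ∑ j ∈ A, y j • a j
        - ∑ j ∈ B, y j • (Submodule.orthogonalProjectionOnto spA (a j) : EuclideanSpace ℝ (Fin d)) := by
      rw [hv, hu0, hq, Finset.sum_union hAB]
      simp only [smul_sub, Finset.sum_sub_distrib]
      abel
    rw [hexp]
    refine sub_mem (sub_mem (Submodule.coe_mem _) ?_) ?_
    · exact Submodule.sum_mem _ fun j hj => Submodule.smul_mem _ _
        (Submodule.subset_span ⟨j, by exact_mod_cast hj, rfl⟩)
    · exact Submodule.sum_mem _ fun j _ => Submodule.smul_mem _ _ (Submodule.coe_mem _)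
  have hveq : v = u0 := by
    have h0 : v - u0 ∈ spA ⊓ spAᗮ := ⟨hdiffA, sub_mem hvA hu0A⟩
    rw [(Submodule.orthogonal_disjoint spA).eq_bot] at h0
    exact sub_eq_zero.mp (by exact_mod_cast h0)
  -- the key identity
  have hkey : ⟪a k, e - (Submodule.orthogonalProjectionOnto spJ e : EuclideanSpace ℝ (Fin d))⟫
      = ⟪q k, e⟫ - ∑ j ∈ B, y j * ⟪q j, e⟫ := by
    have hre : e - (Submodule.orthogonalProjectionOnto spJ e : EuclideanSpace ℝ (Fin d)) ∈ spJᗮ :=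
      Submodule.sub_starProjection_mem_orthogonal (K := spJ) e
    have hak : a k = v + ∑ j ∈ J, y j • a j := by rw [hv]; abel
    have hmem : (∑ j ∈ J, y j • a j) ∈ spJ :=
      Submodule.sum_mem _ fun j hj => Submodule.smul_mem _ _
        (Submodule.subset_span (Set.mem_image_of_mem a (Finset.mem_coe.mpr hj)))
    calc ⟪a k, e - (Submodule.orthogonalProjectionOnto spJ e : EuclideanSpace ℝ (Fin d))⟫
        = ⟪v, e - (Submodule.orthogonalProjectionOnto spJ e : EuclideanSpace ℝ (Fin d))⟫
          + ⟪∑ j ∈ J, y j • a j, e - (Submodule.orthogonalProjectionOnto spJ e : EuclideanSpace ℝ (Fin d))⟫ := by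
          rw [← inner_add_left, ← hak]
      _ = ⟪v, e⟫ := by
          rw [Submodule.inner_right_of_mem_orthogonal hmem hre,
            add_zero, inner_sub_right,
            Submodule.inner_left_of_mem_orthogonal (Submodule.coe_mem _) hvJ, sub_zero]
      _ = ⟪q k, e⟫ - ∑ j ∈ B, y j * ⟪q j, e⟫ := by
          rw [hveq, hu0, inner_sub_left, sum_inner]
          simp only [real_inner_smul_left]
  -- bounds
  have hCk : |⟪q k, e⟫| ≤ C := hC k hkA
  have hC0 : 0 ≤ C := le_trans (abs_nonneg _) hCk
  have hCB : ∀ j ∈ B, |⟪q j, e⟫| ≤ C := fun j hj =>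
    hC j (Finset.disjoint_right.mp hAB hj)
  have hS : ∑ j ∈ B, |y j| ≤ μ * Real.sqrt (J.card * B.card) / (1 - δ) := by
    rcases B.eq_empty_or_nonempty with hB | hB
    · simp [hB]
    obtain ⟨j₀, hj₀⟩ := hB
    have hj₀k : j₀ ≠ k := fun h => hk (h ▸ Finset.mem_union_right _ hj₀)
    have hμ0 : 0 ≤ μ := le_trans (abs_nonneg _) (hμ j₀ k hj₀k)
    -- bound on the coefficient vector
    have hxsq : ∑ j ∈ B, y j ^ 2 ≤ ‖x‖ ^ 2 := by
      have h1 : ∑ j ∈ B, y j ^ 2 ≤ ∑ j ∈ J, y j ^ 2 :=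
        Finset.sum_le_sum_of_subset_of_nonneg Finset.subset_union_right
          (fun j _ _ => sq_nonneg _)
      have h2 : ∑ j ∈ J, y j ^ 2 = ∑ j : ↥J, (x j) ^ 2 := by
        rw [← Finset.sum_coe_sort J (fun j => y j ^ 2)]
        exact Finset.sum_congr rfl fun j _ => by simp [hy, j.2]
      have h3 : ‖x‖ ^ 2 = ∑ j : ↥J, (x j) ^ 2 := by
        rw [EuclideanSpace.norm_eq,
          Real.sq_sqrt (Finset.sum_nonneg fun j _ => sq_nonneg _)]
        simp [Real.norm_eq_abs, sq_abs]
      rw [h3, ← h2]; exact h1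
    -- bound on ‖g‖
    have hgnorm : ‖g‖ ≤ Real.sqrt J.card * μ := by
      rw [hg, EuclideanSpace.norm_eq]
      have hbd : ∀ i : ↥J, ‖(WithLp.equiv 2 (↥J → ℝ)).symm (fun i : ↥J => ⟪a i.1, a k⟫) i‖ ^ 2
          ≤ μ ^ 2 := by
        intro i
        have hik : i.1 ≠ k := fun h => hk (h ▸ i.2)
        have := hμ i.1 k hik
        calc ‖(WithLp.equiv 2 (↥J → ℝ)).symm (fun i : ↥J => ⟪a i.1, a k⟫) i‖ ^ 2
            = |⟪a i.1, a k⟫| ^ 2 := by simp [Real.norm_eq_abs]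
          _ ≤ μ ^ 2 := pow_le_pow_left₀ (abs_nonneg _) this 2
      calc Real.sqrt (∑ i : ↥J, ‖(WithLp.equiv 2 (↥J → ℝ)).symm
              (fun i : ↥J => ⟪a i.1, a k⟫) i‖ ^ 2)
          ≤ Real.sqrt (∑ _i : ↥J, μ ^ 2) :=
            Real.sqrt_le_sqrt (Finset.sum_le_sum fun i _ => hbd i)
        _ = Real.sqrt (J.card * μ ^ 2) := by
            rw [Finset.sum_const, Finset.card_univ, Fintype.card_coe, nsmul_eq_mul]
        _ = Real.sqrt J.card * μ := by
            rw [Real.sqrt_mul (Nat.cast_nonneg _), Real.sqrt_sq hμ0]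
    -- Cauchy-Schwarz on the sum of absolute values
    have hCS : ∑ j ∈ B, |y j| ≤ Real.sqrt B.card * ‖x‖ := by
      have h1 : (∑ j ∈ B, |y j|) ^ 2 ≤ B.card * ∑ j ∈ B, y j ^ 2 := by
        have := sq_sum_le_card_mul_sum_sq (s := B) (f := fun j => |y j|)
        simpa [sq_abs] using this
      have h2 : (∑ j ∈ B, |y j|) ^ 2 ≤ B.card * ‖x‖ ^ 2 :=
        h1.trans (mul_le_mul_of_nonneg_left hxsq (Nat.cast_nonneg _))
      calc ∑ j ∈ B, |y j| = Real.sqrt ((∑ j ∈ B, |y j|) ^ 2) :=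
            (Real.sqrt_sq (Finset.sum_nonneg fun j _ => abs_nonneg _)).symm
        _ ≤ Real.sqrt (B.card * ‖x‖ ^ 2) := Real.sqrt_le_sqrt h2
        _ = Real.sqrt B.card * ‖x‖ := by
            rw [Real.sqrt_mul (Nat.cast_nonneg _), Real.sqrt_sq (norm_nonneg _)]
    calc ∑ j ∈ B, |y j| ≤ Real.sqrt B.card * ‖x‖ := hCS
      _ ≤ Real.sqrt B.card * ((1 - δ)⁻¹ * ‖g‖) :=
          mul_le_mul_of_nonneg_left hxnorm (Real.sqrt_nonneg _)
      _ ≤ Real.sqrt B.card * ((1 - δ)⁻¹ * (Real.sqrt J.card * μ)) :=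
          mul_le_mul_of_nonneg_left
            (mul_le_mul_of_nonneg_left hgnorm (inv_nonneg.mpr h1δ.le)) (Real.sqrt_nonneg _)
      _ = μ * Real.sqrt (J.card * B.card) / (1 - δ) := by
          rw [Real.sqrt_mul (Nat.cast_nonneg _)]
          field_simp
  -- put it together
  rw [hkey]
  calc |⟪q k, e⟫ - ∑ j ∈ B, y j * ⟪q j, e⟫|
      ≤ |⟪q k, e⟫| + |∑ j ∈ B, y j * ⟪q j, e⟫| := abs_sub _ _
    _ ≤ C + (∑ j ∈ B, |y j|) * C := by
        refine add_le_add hCk ?_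
        calc |∑ j ∈ B, y j * ⟪q j, e⟫| ≤ ∑ j ∈ B, |y j * ⟪q j, e⟫| :=
              Finset.abs_sum_le_sum_abs _ _
          _ ≤ ∑ j ∈ B, |y j| * C := Finset.sum_le_sum fun j hj => by
              rw [abs_mul]
              exact mul_le_mul_of_nonneg_left (hCB j hj) (abs_nonneg _)
          _ = (∑ j ∈ B, |y j|) * C := by rw [Finset.sum_mul]
    _ ≤ C + (μ * Real.sqrt (J.card * B.card) / (1 - δ)) * C := by
        refine add_le_add le_rfl (mul_le_mul_of_nonneg_right hS hC0)
    _ = (1 + μ * Real.sqrt (J.card * B.card) / (1 - δ)) * C := by ring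
end

section
/- Suppose 2Sμ < 1 for a dictionary with coherence μ, and y = ∑_{i∈I} x_i a_i with |I| = S and all x_i ≠ 0. Then for any correct sub-support J ⊊ I, the residual r_J = (I − P(D_J))y is nonzero and max_{i∈I∖J}|⟨a_i, r_J⟩| > max_{k∉I}|⟨a_k, r_J⟩|; consequently OMP recovers the full support I in S steps (worst-case exact recovery condition). -/
open scoped RealInnerProductSpace

/-- Worst-case exact recovery condition for OMP: if `2 S μ < 1`, `y = ∑_{i∈I} x i • a i`
with `|I| = S` and all `x i ≠ 0`, then for any proper sub-support `J ⊊ I` the residual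
`r = (I − P(D_J)) y` is nonzero and some atom in `I ∖ J` beats all atoms outside `I`,
so OMP selects a correct atom at every step. -/
theorem omp_worst_case_recovery {d K : ℕ} (a : Fin K → EuclideanSpace ℝ (Fin d))
    (μ : ℝ) (x : Fin K → ℝ) (I J : Finset (Fin K)) (S : ℕ)
    (r : EuclideanSpace ℝ (Fin d))
    (hnorm : ∀ i, ‖a i‖ = 1)
    (hμ0 : 0 ≤ μ)
    (hμ : ∀ i j, i ≠ j → |⟪a i, a j⟫| ≤ μ)
    (hcard : I.card = S)
    (hcond : 2 * S * μ < 1)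
    (hx : ∀ i ∈ I, x i ≠ 0)
    (hJ : J ⊂ I)
    (hr : r = (∑ i ∈ I, x i • a i) -
      (Submodule.orthogonalProjectionOnto (Submodule.span ℝ (a '' ↑J)) (∑ i ∈ I, x i • a i) :
        EuclideanSpace ℝ (Fin d))) :
    r ≠ 0 ∧ ∃ i ∈ I, i ∉ J ∧ ∀ k, k ∉ I → |⟪a k, r⟫| < |⟪a i, r⟫| := by
  set y : EuclideanSpace ℝ (Fin d) := ∑ i ∈ I, x i • a i with hy
  obtain ⟨i1, hi1I, hi1J⟩ := Finset.exists_of_ssubset hJ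
  have hIne : I.Nonempty := ⟨i1, hi1I⟩
  have hS1 : 1 ≤ S := hcard ▸ Finset.card_pos.mpr hIne
  -- write the projection as a linear combination supported on J
  have hmem : (Submodule.orthogonalProjectionOnto (Submodule.span ℝ (a '' ↑J)) y :
      EuclideanSpace ℝ (Fin d)) ∈ Submodule.span ℝ (a '' (↑J : Set (Fin K))) :=
    (Submodule.orthogonalProjectionOnto _ y).2
  rw [Finsupp.mem_span_image_iff_linearCombination] at hmem
  obtain ⟨l, hlsupp, hl⟩ := hmem
  have hl0 : ∀ i ∉ J, l i = 0 := by
    intro i hi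
    exact (Finsupp.mem_supported' ℝ l).1 hlsupp i (by simpa using hi)
  set b : Fin K → ℝ := fun i => x i - l i with hb
  have hrb : r = ∑ i ∈ I, b i • a i := by
    rw [hr, ← hl]
    have hsum : (Finsupp.linearCombination ℝ a) l = ∑ i ∈ I, l i • a i := by
      rw [Finsupp.linearCombination_apply, Finsupp.sum]
      apply Finset.sum_subset
      · intro i hi
        exact hJ.subset (by simpa using hlsupp (by simpa using hi))
      · intro i _ hi
        simp [Finsupp.notMem_support_iff.mp hi]
    rw [hsum, ← Finset.sum_sub_distrib]
    exact Finset.sum_congr rfl fun i _ => by rw [hb]; rw [sub_smul]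
  -- inner products with the residual
  have hip : ∀ k, ⟪a k, r⟫ = ∑ i ∈ I, b i * ⟪a k, a i⟫ := by
    intro k
    rw [hrb, inner_sum]
    exact Finset.sum_congr rfl fun i _ => real_inner_smul_right _ _ _
  have horth : ∀ j ∈ J, ⟪a j, r⟫ = 0 := by
    intro j hj
    have hmem' : r ∈ (Submodule.span ℝ (a '' (↑J : Set (Fin K))))ᗮ := by
      rw [hr]
      exact Submodule.sub_starProjection_mem_orthogonal y
    exact hmem' (a j) (Submodule.subset_span ⟨j, hj, rfl⟩)
  have hself : ∀ i, ⟪a i, a i⟫ = 1 := by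
    intro i
    rw [real_inner_self_eq_norm_sq, hnorm i]; norm_num
  -- the max coefficient
  obtain ⟨i0, hi0I, hi0max⟩ := I.exists_max_image (fun i => |b i|) hIne
  set B : ℝ := |b i0| with hB
  have hBpos : 0 < B := by
    have : b i1 = x i1 := by simp [hb, hl0 i1 hi1J]
    have h1 : 0 < |b i1| := abs_pos.mpr (this ▸ hx i1 hi1I)
    exact lt_of_lt_of_le h1 (hi0max i1 hi1I)
  -- decomposition of ⟪a i, r⟫ for i ∈ I
  have hdecomp : ∀ i ∈ I, ⟪a i, r⟫ = b i + ∑ j ∈ I.erase i, b j * ⟪a i, a j⟫ := by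
    intro i hi
    rw [hip i, ← Finset.add_sum_erase _ _ hi, hself i, mul_one]
  have herasecard : ∀ i ∈ I, ((I.erase i).card : ℝ) = (S : ℝ) - 1 := by
    intro i hi
    rw [Finset.card_erase_of_mem hi, hcard, Nat.cast_sub hS1, Nat.cast_one]
  have htail : ∀ i ∈ I, |∑ j ∈ I.erase i, b j * ⟪a i, a j⟫| ≤ ((S : ℝ) - 1) * μ * B := by
    intro i hi
    calc |∑ j ∈ I.erase i, b j * ⟪a i, a j⟫| ≤ ∑ j ∈ I.erase i, |b j * ⟪a i, a j⟫| :=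
          Finset.abs_sum_le_sum_abs _ _
      _ ≤ ∑ j ∈ I.erase i, μ * B := by
          apply Finset.sum_le_sum
          intro j hj
          rw [abs_mul]
          have h1 : |b j| ≤ B := hi0max j (Finset.mem_of_mem_erase hj)
          have h2 : |⟪a i, a j⟫| ≤ μ := hμ i j (Finset.ne_of_mem_erase hj).symm
          calc |b j| * |⟪a i, a j⟫| ≤ B * μ :=
                mul_le_mul h1 h2 (abs_nonneg _) (le_of_lt hBpos)
            _ = μ * B := mul_comm _ _
      _ = ((S : ℝ) - 1) * μ * B := by
          rw [Finset.sum_const, nsmul_eq_mul, herasecard i hi, mul_assoc]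
  have hSμ1 : ((S : ℝ) - 1) * μ < 1 := by
    have : (1 : ℝ) ≤ (S : ℝ) := by exact_mod_cast hS1
    nlinarith
  -- i0 ∉ J
  have hi0J : i0 ∉ J := by
    intro hj
    have h0 := horth i0 hj
    have hd := hdecomp i0 hi0I
    have : B ≤ ((S : ℝ) - 1) * μ * B := by
      have : b i0 = -∑ j ∈ I.erase i0, b j * ⟪a i0, a j⟫ := by
        rw [h0] at hd; linarith
      calc B = |b i0| := rfl
        _ = |∑ j ∈ I.erase i0, b j * ⟪a i0, a j⟫| := by rw [this, abs_neg]
        _ ≤ ((S : ℝ) - 1) * μ * B := htail i0 hi0I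
    nlinarith
  -- lower bound on |⟪a i0, r⟫|
  have hlow : (1 - ((S : ℝ) - 1) * μ) * B ≤ |⟪a i0, r⟫| := by
    have hd := hdecomp i0 hi0I
    have ht := htail i0 hi0I
    have h1 : B - ((S : ℝ) - 1) * μ * B ≤ |b i0| - |∑ j ∈ I.erase i0, b j * ⟪a i0, a j⟫| := by
      rw [hB]; linarith
    calc (1 - ((S : ℝ) - 1) * μ) * B = B - ((S : ℝ) - 1) * μ * B := by ring
      _ ≤ |b i0| - |∑ j ∈ I.erase i0, b j * ⟪a i0, a j⟫| := h1
      _ ≤ |b i0 + ∑ j ∈ I.erase i0, b j * ⟪a i0, a j⟫| := by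
          have := abs_add_le (b i0 + ∑ j ∈ I.erase i0, b j * ⟪a i0, a j⟫)
            (-∑ j ∈ I.erase i0, b j * ⟪a i0, a j⟫)
          simp only [add_neg_cancel_right, abs_neg] at this
          linarith
      _ = |⟪a i0, r⟫| := by rw [hd]
  -- upper bound for k ∉ I
  have hup : ∀ k, k ∉ I → |⟪a k, r⟫| ≤ (S : ℝ) * μ * B := by
    intro k hk
    rw [hip k]
    calc |∑ i ∈ I, b i * ⟪a k, a i⟫| ≤ ∑ i ∈ I, |b i * ⟪a k, a i⟫| :=
          Finset.abs_sum_le_sum_abs _ _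
      _ ≤ ∑ i ∈ I, μ * B := by
          apply Finset.sum_le_sum
          intro i hi
          rw [abs_mul]
          have h2 : |⟪a k, a i⟫| ≤ μ := hμ k i (fun h => hk (h ▸ hi))
          calc |b i| * |⟪a k, a i⟫| ≤ B * μ :=
                mul_le_mul (hi0max i hi) h2 (abs_nonneg _) (le_of_lt hBpos)
            _ = μ * B := mul_comm _ _
      _ = (S : ℝ) * μ * B := by
          rw [Finset.sum_const, nsmul_eq_mul, hcard, mul_assoc]
  have hkey : (S : ℝ) * μ * B < (1 - ((S : ℝ) - 1) * μ) * B := by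
    nlinarith
  constructor
  · intro h0
    rw [h0] at hlow
    simp only [inner_zero_right, abs_zero] at hlow
    nlinarith
  · exact ⟨i0, hi0I, hi0J, fun k hk => lt_of_le_of_lt (hup k hk) (lt_of_lt_of_le hkey hlow)⟩
end

section
/- Let c_{Z} be the tail (c_k)_{k ≥ i+T} of a sequence satisfying c_{i+t} ≤ (1−λ/S)c_i, with T = t⌈S/λ⌉, 0 < λ ≤ S, t ∈ ℕ₊. If additionally 1 − (1−λ/S)² ≥ λ/S, then ‖c_Z‖₂ ≤ c_i e^{−1} √(tS/λ). (The hypothesis 1−(1−λ/S)² ≥ λ/S holds automatically since λ/S ∈ (0,1].) -/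
/-- Tail ℓ² bound with the explicit auxiliary hypothesis: if `c (i+t) ≤ (1 − λ/S) c i`
for all `i`, `0 < λ ≤ S`, `t ≥ 1`, `T = t ⌈S/λ⌉`, and `1 − (1 − λ/S)² ≥ λ/S`, then
`‖c_Z‖₂ ≤ c i e⁻¹ √(t S / λ)` where `Z = {k : k ≥ i + T}`. -/
theorem tail_l2_norm_bound_explicit (c : ℕ → ℝ) (t : ℕ) (lam S : ℝ) (i : ℕ)
    (hc : ∀ n, 0 ≤ c n) (hmono : Antitone c) (ht : 1 ≤ t)
    (hlam : 0 < lam) (hS : lam ≤ S)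
    (hdecay : ∀ n, c (n + t) ≤ (1 - lam / S) * c n)
    (hq : lam / S ≤ 1 - (1 - lam / S) ^ 2) :
    Real.sqrt (∑' k : {k : ℕ // i + t * ⌈S / lam⌉₊ ≤ k}, c k ^ 2) ≤
      c i * Real.exp (-1) * Real.sqrt (t * S / lam) := by
  have hSpos : 0 < S := lt_of_lt_of_le hlam hS
  set q : ℝ := 1 - lam / S with hqdef
  have hx1 : lam / S ≤ 1 := (div_le_one hSpos).2 hS
  have hx0 : 0 < lam / S := div_pos hlam hSpos
  have hq0 : 0 ≤ q := by simp only [hqdef]; linarith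
  have hq1 : q < 1 := by simp only [hqdef]; linarith
  set N : ℕ := i + t * ⌈S / lam⌉₊ with hNdef
  -- iterated decay
  have hiter : ∀ (a n : ℕ), c (a + t * n) ≤ q ^ n * c a := by
    intro a n
    induction n with
    | zero => simp
    | succ n ih =>
      have h : a + t * (n + 1) = a + t * n + t := by ring
      rw [h]
      calc c (a + t * n + t) ≤ q * c (a + t * n) := hdecay _
        _ ≤ q * (q ^ n * c a) := mul_le_mul_of_nonneg_left ih hq0
        _ = q ^ (n + 1) * c a := by ring
  -- c N ≤ c i * exp (-1)
  have hqexp : q ≤ Real.exp (-(lam / S)) := by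
    have := Real.add_one_le_exp (-(lam / S))
    linarith
  have hceil : (S / lam : ℝ) ≤ (⌈S / lam⌉₊ : ℝ) := Nat.le_ceil _
  have hcN : c N ≤ c i * Real.exp (-1) := by
    have h1 : c N ≤ q ^ ⌈S / lam⌉₊ * c i := hiter i _
    have h2 : q ^ ⌈S / lam⌉₊ ≤ Real.exp (-(lam / S)) ^ ⌈S / lam⌉₊ :=
      pow_le_pow_left₀ hq0 hqexp _
    have h3 : Real.exp (-(lam / S)) ^ ⌈S / lam⌉₊ = Real.exp (-(lam / S) * ⌈S / lam⌉₊) := by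
      rw [← Real.exp_nat_mul]; ring_nf
    have h4 : (-(lam / S) * ⌈S / lam⌉₊ : ℝ) ≤ -1 := by
      have h5 : (1 : ℝ) ≤ (lam / S) * ⌈S / lam⌉₊ := by
        have h6 := mul_le_mul_of_nonneg_left hceil (le_of_lt hx0)
        calc (1 : ℝ) = (lam / S) * (S / lam) := by field_simp
          _ ≤ (lam / S) * ⌈S / lam⌉₊ := h6
      linarith
    calc c N ≤ q ^ ⌈S / lam⌉₊ * c i := h1
      _ ≤ Real.exp (-(lam / S) * ⌈S / lam⌉₊) * c i := by
          rw [← h3]; exact mul_le_mul_of_nonneg_right h2 (hc i)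
      _ ≤ Real.exp (-1) * c i :=
          mul_le_mul_of_nonneg_right (Real.exp_le_exp.2 h4) (hc i)
      _ = c i * Real.exp (-1) := mul_comm _ _
  have htpos : 0 < t := ht
  -- pointwise bound on the tail
  have hpt : ∀ m : ℕ, c (N + m) ≤ q ^ (m / t) * c N := by
    intro m
    have h1 : N + t * (m / t) ≤ N + m :=
      Nat.add_le_add_left (by rw [mul_comm]; exact Nat.div_mul_le_self m t) N
    exact le_trans (hmono h1) (hiter N (m / t))
  set r : ℝ := q ^ 2 with hrdef
  have hr0 : 0 ≤ r := sq_nonneg q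
  have hr1 : r < 1 := by
    have : q ^ 2 ≤ q := by nlinarith
    linarith
  have hrls : lam / S ≤ 1 - r := hq
  set C : ℝ := c N ^ 2 with hCdef
  have hC0 : 0 ≤ C := sq_nonneg _
  have : NeZero t := ⟨by omega⟩
  have hptsq : ∀ m : ℕ, c (N + m) ^ 2 ≤ C * r ^ (m / t) := by
    intro m
    have := pow_le_pow_left₀ (hc (N + m)) (hpt m) 2
    calc c (N + m) ^ 2 ≤ (q ^ (m / t) * c N) ^ 2 := this
      _ = C * (q ^ 2) ^ (m / t) := by rw [mul_pow, ← pow_mul, ← pow_mul']; ring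
  -- summability of majorant via div-mod equivalence
  have hkey : (fun p : ℕ × Fin t => C * r ^ (((Nat.divModEquiv t).symm p : ℕ) / t))
      = fun p : ℕ × Fin t => (C * r ^ p.1) * 1 := by
    funext p
    have h1 : ((Nat.divModEquiv t).symm p : ℕ) = p.1 * t + (p.2 : ℕ) := rfl
    have h2 : (p.1 * t + (p.2 : ℕ)) / t = p.1 := by
      rw [mul_comm, Nat.mul_add_div htpos, Nat.div_eq_of_lt p.2.is_lt, Nat.add_zero]
    rw [h1, h2, mul_one]
  have hgeom : Summable (fun n : ℕ => C * r ^ n) :=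
    (summable_geometric_of_lt_one hr0 hr1).mul_left C
  have hone : Summable (fun _ : Fin t => (1 : ℝ)) := Summable.of_finite
  have hprod : Summable (fun p : ℕ × Fin t => (C * r ^ p.1) * 1) :=
    hgeom.mul_of_nonneg hone (fun n => by positivity) (fun _ => zero_le_one)
  have hg : Summable (fun m : ℕ => C * r ^ (m / t)) := by
    rw [← (Nat.divModEquiv t).symm.summable_iff]
    show Summable (fun p : ℕ × Fin t => C * r ^ (((Nat.divModEquiv t).symm p : ℕ) / t))
    rw [hkey]; exact hprod
  have hf : Summable (fun m : ℕ => c (N + m) ^ 2) :=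
    Summable.of_nonneg_of_le (fun m => sq_nonneg _) hptsq hg
  have hconst : ∀ x : ℝ, (∑' _ : Fin t, x) = t * x := by
    intro x; rw [tsum_fintype]; simp [Finset.sum_const, nsmul_eq_mul]
  have htg : ∑' m : ℕ, C * r ^ (m / t) = t * (C * (1 - r)⁻¹) := by
    rw [← (Nat.divModEquiv t).symm.tsum_eq]
    show (∑' p : ℕ × Fin t, C * r ^ (((Nat.divModEquiv t).symm p : ℕ) / t)) = _
    rw [hkey]
    rw [Summable.tsum_prod' hprod (fun n => Summable.of_finite)]
    simp only [mul_one]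
    calc (∑' n : ℕ, ∑' _ : Fin t, C * r ^ n) = ∑' n : ℕ, (t : ℝ) * (C * r ^ n) := by
          simp only [hconst]
      _ = (t : ℝ) * ∑' n : ℕ, C * r ^ n := tsum_mul_left
      _ = t * (C * (1 - r)⁻¹) := by
          rw [tsum_mul_left, tsum_geometric_of_lt_one hr0 hr1]
  -- reindex the subtype sum
  let e : ℕ ≃ {k : ℕ // N ≤ k} :=
    { toFun := fun m => ⟨N + m, Nat.le_add_right _ _⟩
      invFun := fun k => k.1 - N
      left_inv := fun m => by simp
      right_inv := fun k => by
        ext; simp [Nat.add_sub_cancel' k.2] }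
  have hre : (∑' k : {k : ℕ // N ≤ k}, c k ^ 2) = ∑' m : ℕ, c (N + m) ^ 2 := by
    rw [← e.tsum_eq]
    exact tsum_congr fun m => rfl
  have h1r : 0 < 1 - r := lt_of_lt_of_le hx0 hrls
  have hsum_le : (∑' k : {k : ℕ // N ≤ k}, c k ^ 2) ≤ C * (t * S / lam) := by
    rw [hre]
    calc (∑' m : ℕ, c (N + m) ^ 2) ≤ ∑' m : ℕ, C * r ^ (m / t) :=
          Summable.tsum_le_tsum hptsq hf hg
      _ = t * (C * (1 - r)⁻¹) := htg
      _ ≤ C * (t * S / lam) := by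
          have h5 : (1 - r)⁻¹ ≤ S / lam := by
            rw [inv_le_comm₀ h1r (div_pos hSpos hlam)]
            rw [inv_div]
            exact hrls
          have h6 : C * (1 - r)⁻¹ ≤ C * (S / lam) :=
            mul_le_mul_of_nonneg_left h5 hC0
          have h7 : (0:ℝ) ≤ t := Nat.cast_nonneg t
          calc (t : ℝ) * (C * (1 - r)⁻¹) ≤ t * (C * (S / lam)) :=
                mul_le_mul_of_nonneg_left h6 h7
            _ = C * (t * S / lam) := by ring
  calc Real.sqrt (∑' k : {k : ℕ // N ≤ k}, c k ^ 2)
      ≤ Real.sqrt (C * (t * S / lam)) := Real.sqrt_le_sqrt hsum_le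
    _ = c N * Real.sqrt (t * S / lam) := by
        rw [hCdef, Real.sqrt_mul (sq_nonneg _), Real.sqrt_sq (hc N)]
    _ ≤ c i * Real.exp (-1) * Real.sqrt (t * S / lam) :=
        mul_le_mul_of_nonneg_right hcN (Real.sqrt_nonneg _)
end
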